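/- arXiv:1905.10705 — 2 statements merged into one kernel-verified Lean document; each statement's English description precedes it below -/
import Mathlib

section
/- Fix λ ≥ 0, an index set Ω, matrices Y (N×T), I_S (N×T), and B (T×K) with orthonormal columns. Define f_λ(W, μ) = (1/2)‖P_Ω(Y − WB' − μ I_S)‖_F² + λ‖W‖_* and Q_λ(W | W̃, μ) = (1/2)‖P_Ω(Y − μ I_S) + P_Ω^⊥(W̃ B') − WB'‖_F² + λ‖W‖_*. Then for all W, W̃ and μ: f_λ(W, μ) ≤ Q_λ(W | W̃, μ), with equality when W = W̃. -/
open Matrix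

/-- Coordinate projection onto an index set `Ω`. -/
def projOmega {N T : ℕ} (Ω : Finset (Fin N × Fin T)) (A : Matrix (Fin N) (Fin T) ℝ) :
    Matrix (Fin N) (Fin T) ℝ :=
  fun i j => if (i, j) ∈ Ω then A i j else 0

/-- Squared Frobenius norm. -/
def frobSq {m n : Type*} [Fintype m] [Fintype n] (A : Matrix m n ℝ) : ℝ :=
  ∑ i, ∑ j, (A i j) ^ 2

/-- Nuclear norm: sum of singular values. -/
noncomputable def nuclearNorm {N K : ℕ} (A : Matrix (Fin N) (Fin K) ℝ) : ℝ :=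
  ∑ i, Real.sqrt ((Matrix.isHermitian_conjTranspose_mul_self A).eigenvalues i)

/-- the CSI objective `f_λ` is majorized by the surrogate `Q_λ`,
with equality when `W = W̃`. -/
theorem csi_majorization {N T K : ℕ} (lam : ℝ) (hlam : 0 ≤ lam)
    (Ω : Finset (Fin N × Fin T))
    (Y IS : Matrix (Fin N) (Fin T) ℝ)
    (B : Matrix (Fin T) (Fin K) ℝ) (hB : Bᵀ * B = 1)
    (f Q : Matrix (Fin N) (Fin K) ℝ → Matrix (Fin N) (Fin K) ℝ → ℝ → ℝ)
    (hf : ∀ W Wt μ, f W Wt μ =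
      (1 / 2) * frobSq (projOmega Ω (Y - W * Bᵀ - μ • IS)) + lam * nuclearNorm W)
    (hQ : ∀ W Wt μ, Q W Wt μ =
      (1 / 2) * frobSq (projOmega Ω (Y - μ • IS)
          + (Wt * Bᵀ - projOmega Ω (Wt * Bᵀ)) - W * Bᵀ) + lam * nuclearNorm W) :
    ∀ (W Wt : Matrix (Fin N) (Fin K) ℝ) (μ : ℝ),
      f W Wt μ ≤ Q W Wt μ ∧ f W W μ = Q W W μ := by
  intro W Wt μ
  have hpt : ∀ (Wt : Matrix (Fin N) (Fin K) ℝ) (i : Fin N) (j : Fin T),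
      (projOmega Ω (Y - W * Bᵀ - μ • IS) i j) ^ 2
        ≤ ((projOmega Ω (Y - μ • IS)
          + (Wt * Bᵀ - projOmega Ω (Wt * Bᵀ)) - W * Bᵀ) i j) ^ 2 := by
    intro Wt i j
    simp only [projOmega, Matrix.add_apply, Matrix.sub_apply, Matrix.smul_apply]
    by_cases h : (i, j) ∈ Ω
    · exact le_of_eq (by simp [h]; ring)
    · simp [h]; positivity
  constructor
  · rw [hf, hQ]
    apply add_le_add_left
    apply mul_le_mul_of_nonneg_left _ (by norm_num)
    exact Finset.sum_le_sum fun i _ => Finset.sum_le_sum fun j _ => hpt Wt i j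
  · rw [hf, hQ]
    congr 2
    unfold frobSq
    refine Finset.sum_congr rfl fun i _ => Finset.sum_congr rfl fun j _ => ?_
    simp only [projOmega, Matrix.add_apply, Matrix.sub_apply, Matrix.smul_apply]
    by_cases h : (i, j) ∈ Ω <;> simp [h] <;> ring
end

section
/- For any matrix Z and λ ≥ 0, the unique minimizer of A ↦ (1/2)‖Z − A‖_F² + λ‖A‖_* is A = S_λ(Z), the singular value soft-thresholding of Z at level λ. -/
open Matrix

/-- A full singular value decomposition `Z = U D Vᵀ`. -/
def IsSVD {N K : ℕ} (Z : Matrix (Fin N) (Fin K) ℝ) (U : Matrix (Fin N) (Fin N) ℝ)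
    (D : Matrix (Fin N) (Fin K) ℝ) (V : Matrix (Fin K) (Fin K) ℝ) : Prop :=
  Uᵀ * U = 1 ∧ Vᵀ * V = 1 ∧ (∀ i j, i.val ≠ j.val → D i j = 0) ∧
  (∀ i j, 0 ≤ D i j) ∧ Z = U * D * Vᵀ

/-- Soft thresholding of the singular value matrix. -/
def softDiag {N K : ℕ} (lam : ℝ) (D : Matrix (Fin N) (Fin K) ℝ) : Matrix (Fin N) (Fin K) ℝ :=
  fun i j => if i.val = j.val then max (D i j - lam) 0 else 0

/-! ### Auxiliary material -/

/-- Frobenius inner product. -/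
def ipF {m n : Type*} [Fintype m] [Fintype n] (P Q : Matrix m n ℝ) : ℝ :=
  ∑ i, ∑ j, P i j * Q i j

lemma frobSq_nonneg {m n : Type*} [Fintype m] [Fintype n] (A : Matrix m n ℝ) : 0 ≤ frobSq A := by
  apply Finset.sum_nonneg; intro i _; apply Finset.sum_nonneg; intro j _; positivity

lemma eq_of_frobSq_eq_zero {m n : Type*} [Fintype m] [Fintype n] {A B : Matrix m n ℝ}
    (h : frobSq (A - B) = 0) : A = B := by
  have h2 : ∀ i ∈ Finset.univ, ∑ j, ((A - B) i j)^2 = 0 := by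
    intro i _
    have := Finset.sum_eq_zero_iff_of_nonneg (s := (Finset.univ : Finset m))
      (f := fun i => ∑ j, ((A - B) i j)^2) ?_ |>.mp h i (Finset.mem_univ i)
    · exact this
    · intro i _; apply Finset.sum_nonneg; intro j _; positivity
  ext i j
  have := Finset.sum_eq_zero_iff_of_nonneg (s := (Finset.univ : Finset n))
    (f := fun j => ((A - B) i j)^2) (by intro j _; positivity) |>.mp (h2 i (Finset.mem_univ i)) j
    (Finset.mem_univ j)
  have h3 : (A - B) i j = 0 := by nlinarith [sq_nonneg ((A-B) i j)]
  have := sub_eq_zero.mp (by simpa [Matrix.sub_apply] using h3)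
  linarith [this.le, this.ge]

lemma frobSq_add {m n : Type*} [Fintype m] [Fintype n] (P Q : Matrix m n ℝ) :
    frobSq (P + Q) = frobSq P + 2 * ipF P Q + frobSq Q := by
  simp only [frobSq, ipF, Matrix.add_apply, ← Finset.sum_add_distrib, Finset.mul_sum]
  congr 1; ext i; congr 1; ext j; ring

lemma ipF_sub_right {m n : Type*} [Fintype m] [Fintype n] (P Q R : Matrix m n ℝ) :
    ipF P (Q - R) = ipF P Q - ipF P R := by
  simp only [ipF, Matrix.sub_apply, ← Finset.sum_sub_distrib]
  congr 1; ext i; congr 1; ext j; ring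

lemma ipF_eq_trace {m n : Type*} [Fintype m] [Fintype n] (P Q : Matrix m n ℝ) :
    ipF P Q = Matrix.trace (Pᵀ * Q) := by
  simp only [ipF, Matrix.trace, Matrix.diag, Matrix.mul_apply, Matrix.transpose_apply]
  exact Finset.sum_comm

/-- Reindexing pseudo-diagonal sums between `Fin N` and `Fin K`. -/
lemma sum_finNK {N K : ℕ} (g : (j : ℕ) → j < N → j < K → ℝ) :
    ∑ i : Fin N, (if h : (i : ℕ) < K then g i i.isLt h else 0)
      = ∑ j : Fin K, (if h : (j : ℕ) < N then g j h j.isLt else 0) := by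
  set G : ℕ → ℝ := fun m => if h : m < N ∧ m < K then g m h.1 h.2 else 0 with hG
  have h1 : ∀ i : Fin N, (if h : (i : ℕ) < K then g i i.isLt h else 0) = G i := by
    intro i; by_cases h : (i : ℕ) < K <;> simp [hG, h, i.isLt]
  have h2 : ∀ j : Fin K, (if h : (j : ℕ) < N then g j h j.isLt else 0) = G j := by
    intro j; by_cases h : (j : ℕ) < N <;> simp [hG, h, j.isLt]
  simp only [h1, h2]
  rw [Fin.sum_univ_eq_sum_range G, Fin.sum_univ_eq_sum_range G]
  rcases le_total N K with h | h
  · rw [← Finset.sum_range_add_sum_Ico G h]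
    have : ∀ m ∈ Finset.Ico N K, G m = 0 := by
      intro m hm; simp only [Finset.mem_Ico] at hm; simp [hG, not_lt.mpr hm.1]
    rw [Finset.sum_eq_zero this, add_zero]
  · rw [← Finset.sum_range_add_sum_Ico G h]
    have : ∀ m ∈ Finset.Ico K N, G m = 0 := by
      intro m hm; simp only [Finset.mem_Ico] at hm; simp [hG, not_lt.mpr hm.1]
    rw [Finset.sum_eq_zero this, add_zero]

lemma ipF_conj {N K : ℕ} (U : Matrix (Fin N) (Fin N) ℝ) (V : Matrix (Fin K) (Fin K) ℝ)
    (hU : Uᵀ * U = 1) (hV : Vᵀ * V = 1) (P Q : Matrix (Fin N) (Fin K) ℝ) :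
    ipF (U * P * Vᵀ) (U * Q * Vᵀ) = ipF P Q := by
  rw [ipF_eq_trace, ipF_eq_trace]
  have collapse : ∀ (X : Matrix (Fin N) (Fin K) ℝ), Uᵀ * (U * X) = X := by
    intro X; rw [← Matrix.mul_assoc, hU, Matrix.one_mul]
  have : (U * P * Vᵀ)ᵀ * (U * Q * Vᵀ) = V * (Pᵀ * Q * Vᵀ) := by
    simp only [Matrix.transpose_mul, Matrix.transpose_transpose, Matrix.mul_assoc, collapse]
  rw [this, ← Matrix.mul_assoc, Matrix.trace_mul_cycle, ← Matrix.mul_assoc, hV, Matrix.one_mul]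

lemma ipF_pseudo_diag {N K : ℕ} (C E : Matrix (Fin N) (Fin K) ℝ)
    (hEoff : ∀ (i : Fin N) (j : Fin K), (i : ℕ) ≠ (j : ℕ) → E i j = 0) :
    ipF C E = ∑ j : Fin K, (if h : (j : ℕ) < N then C ⟨j, h⟩ j * E ⟨j, h⟩ j else 0) := by
  rw [ipF]
  have hrow : ∀ i : Fin N, ∑ j, C i j * E i j
      = if h : (i : ℕ) < K then C i ⟨i, h⟩ * E i ⟨i, h⟩ else 0 := by
    intro i
    by_cases h : (i : ℕ) < K
    · rw [dif_pos h]
      apply Finset.sum_eq_single (⟨(i : ℕ), h⟩ : Fin K)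
      · intro j _ hj
        rw [hEoff i j (fun hc => hj (by ext; simp [← hc])), mul_zero]
      · simp
    · rw [dif_neg h]
      apply Finset.sum_eq_zero
      intro j _
      rw [hEoff i j (by omega), mul_zero]
  simp only [hrow]
  exact sum_finNK (fun m h1 h2 => C ⟨m, h1⟩ ⟨m, h2⟩ * E ⟨m, h1⟩ ⟨m, h2⟩)

/-- Cauchy–Schwarz for finite sums. -/
lemma cs_sum {ι : Type*} [Fintype ι] (f g : ι → ℝ) :
    ∑ i, f i * g i ≤ Real.sqrt (∑ i, f i ^ 2) * Real.sqrt (∑ i, g i ^ 2) := by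
  have h := Finset.sum_mul_sq_le_sq_mul_sq Finset.univ f g
  calc ∑ i, f i * g i ≤ |∑ i, f i * g i| := le_abs_self _
    _ = Real.sqrt ((∑ i, f i * g i) ^ 2) := (Real.sqrt_sq_eq_abs _).symm
    _ ≤ Real.sqrt ((∑ i, f i ^ 2) * ∑ i, g i ^ 2) := Real.sqrt_le_sqrt h
    _ = _ := Real.sqrt_mul (by positivity) _

lemma ipF_mul_right {N K : ℕ} (W : Matrix (Fin K) (Fin K) ℝ) (hW : W * Wᵀ = 1)
    (X Y : Matrix (Fin N) (Fin K) ℝ) : ipF (X * W) (Y * W) = ipF X Y := by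
  rw [ipF_eq_trace, ipF_eq_trace]
  have : (X * W)ᵀ * (Y * W) = Wᵀ * (Xᵀ * Y) * W := by
    simp only [Matrix.transpose_mul, Matrix.mul_assoc]
  rw [this, Matrix.trace_mul_cycle, ← Matrix.mul_assoc, Matrix.mul_assoc, hW,
    Matrix.one_mul]

/-- Key inequality (von Neumann-lite): if `G` contracts norms by a factor `lam`, then the
Frobenius inner product of `G` with any `A` is at most `lam` times the nuclear norm of `A`. -/
lemma ip_le_nuclear {N K : ℕ} (lam : ℝ) (hlam : 0 ≤ lam) (G A : Matrix (Fin N) (Fin K) ℝ)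
    (hG : ∀ v : Fin K → ℝ, ∑ i, (G.mulVec v i) ^ 2 ≤ lam ^ 2 * ∑ j, (v j) ^ 2) :
    ipF G A ≤ lam * nuclearNorm A := by
  set hH := Matrix.isHermitian_conjTranspose_mul_self A with hHdef
  set W : Matrix (Fin K) (Fin K) ℝ := (hH.eigenvectorUnitary : Matrix (Fin K) (Fin K) ℝ)
    with hWdef
  have hsW : star W = Wᵀ := by
    rw [Matrix.star_eq_conjTranspose, Matrix.conjTranspose_eq_transpose_of_trivial]
  have hWWt : W * Wᵀ = 1 := by
    rw [← hsW]; exact (Matrix.mem_unitaryGroup_iff).mp hH.eigenvectorUnitary.2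
  have hWtW : Wᵀ * W = 1 := by
    rw [← hsW]; exact (Matrix.mem_unitaryGroup_iff').mp hH.eigenvectorUnitary.2
  have hdiag : (A * W)ᵀ * (A * W) = Matrix.diagonal hH.eigenvalues := by
    have h0 := hH.conjStarAlgAut_star_eigenvectorUnitary
    simp only [Unitary.conjStarAlgAut_star_apply, Unitary.coe_star] at h0
    rw [hsW] at h0
    have : (A * W)ᵀ * (A * W) = Wᵀ * (Aᴴ * A) * W := by
      rw [Matrix.conjTranspose_eq_transpose_of_trivial]
      simp only [Matrix.transpose_mul, Matrix.mul_assoc]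
    rw [this, h0]
    ext i j
    simp [Matrix.diagonal, Function.comp]
  have key : ipF G A = ∑ j, ∑ i, (G * W) i j * (A * W) i j := by
    rw [← ipF_mul_right W hWWt G A, ipF]
    exact Finset.sum_comm
  rw [key, nuclearNorm, Finset.mul_sum]
  apply Finset.sum_le_sum
  intro j _
  have hAcol : ∑ i, ((A * W) i j) ^ 2 = hH.eigenvalues j := by
    have := congrFun (congrFun hdiag j) j
    simp only [Matrix.mul_apply, Matrix.transpose_apply, Matrix.diagonal_apply_eq] at this
    rw [← this]; congr 1; ext i; rw [Matrix.mul_apply]; ring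
  have hGcol : ∑ i, ((G * W) i j) ^ 2 ≤ lam ^ 2 := by
    have hmv : ∀ i, (G * W) i j = G.mulVec (fun k => W k j) i := by
      intro i; simp [Matrix.mul_apply, Matrix.mulVec, dotProduct]
    have hWcol : ∑ k, (W k j) ^ 2 = 1 := by
      have := congrFun (congrFun hWtW j) j
      simp only [Matrix.mul_apply, Matrix.transpose_apply, Matrix.one_apply_eq] at this
      rw [← this]; congr 1; ext k; ring
    calc ∑ i, ((G * W) i j) ^ 2 = ∑ i, (G.mulVec (fun k => W k j) i) ^ 2 := by
          simp only [hmv]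
      _ ≤ lam ^ 2 * ∑ k, (W k j) ^ 2 := hG _
      _ = lam ^ 2 := by rw [hWcol, mul_one]
  calc ∑ i, (G * W) i j * (A * W) i j
      ≤ Real.sqrt (∑ i, ((G * W) i j) ^ 2) * Real.sqrt (∑ i, ((A * W) i j) ^ 2) := cs_sum _ _
    _ ≤ lam * Real.sqrt (hH.eigenvalues j) := by
        rw [hAcol]
        apply mul_le_mul_of_nonneg_right _ (Real.sqrt_nonneg _)
        calc Real.sqrt (∑ i, ((G * W) i j) ^ 2) ≤ Real.sqrt (lam ^ 2) := Real.sqrt_le_sqrt hGcol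
          _ = lam := by rw [Real.sqrt_sq hlam]

lemma mulVec_norm_eq {N : ℕ} (U : Matrix (Fin N) (Fin N) ℝ) (hU : Uᵀ * U = 1)
    (x : Fin N → ℝ) : ∑ i, ((U *ᵥ x) i) ^ 2 = ∑ i, (x i) ^ 2 := by
  have h1 : (U *ᵥ x) ⬝ᵥ (U *ᵥ x) = x ⬝ᵥ x := by
    rw [Matrix.dotProduct_mulVec, Matrix.vecMul_mulVec, hU, Matrix.vecMul_one]
  simpa [dotProduct, pow_two] using h1

lemma mulVec_pseudo_diag_bound {N K : ℕ} (lam : ℝ)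
    (C : Matrix (Fin N) (Fin K) ℝ)
    (hCoff : ∀ (i : Fin N) (j : Fin K), (i : ℕ) ≠ (j : ℕ) → C i j = 0)
    (hCb : ∀ i j, |C i j| ≤ lam) (y : Fin K → ℝ) :
    ∑ i, ((C *ᵥ y) i) ^ 2 ≤ lam ^ 2 * ∑ j, (y j) ^ 2 := by
  have hentry : ∀ i : Fin N, (C *ᵥ y) i
      = if h : (i : ℕ) < K then C i ⟨i, h⟩ * y ⟨i, h⟩ else 0 := by
    intro i
    rw [Matrix.mulVec, dotProduct]
    by_cases h : (i : ℕ) < K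
    · rw [dif_pos h]
      apply Finset.sum_eq_single (⟨(i : ℕ), h⟩ : Fin K)
      · intro j _ hj
        rw [hCoff i j (fun hc => hj (by ext; simp [← hc])), zero_mul]
      · simp
    · rw [dif_neg h]
      apply Finset.sum_eq_zero
      intro j _
      rw [hCoff i j (by omega), zero_mul]
  calc ∑ i, ((C *ᵥ y) i) ^ 2
      ≤ ∑ i : Fin N, (if h : (i : ℕ) < K then lam ^ 2 * (y ⟨i, h⟩) ^ 2 else 0) := by
        apply Finset.sum_le_sum
        intro i _
        rw [hentry i]
        by_cases h : (i : ℕ) < K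
        · rw [dif_pos h, dif_pos h, mul_pow]
          have habs := abs_le.mp (hCb i ⟨i, h⟩)
          have hsq : (C i ⟨(i : ℕ), h⟩) ^ 2 ≤ lam ^ 2 := sq_le_sq' habs.1 habs.2
          exact mul_le_mul_of_nonneg_right hsq (sq_nonneg _)
        · rw [dif_neg h, dif_neg h]; norm_num
    _ = ∑ j : Fin K, (if _ : (j : ℕ) < N then lam ^ 2 * (y j) ^ 2 else 0) := by
        exact sum_finNK (fun m h1 h2 => lam ^ 2 * (y ⟨m, h2⟩) ^ 2)
    _ ≤ ∑ j : Fin K, lam ^ 2 * (y j) ^ 2 := by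
        apply Finset.sum_le_sum
        intro j _
        by_cases h : (j : ℕ) < N
        · rw [dif_pos h]
        · rw [dif_neg h]; positivity
    _ = lam ^ 2 * ∑ j, (y j) ^ 2 := by rw [Finset.mul_sum]

lemma UCV_mulVec_bound {N K : ℕ} (lam : ℝ)
    (U : Matrix (Fin N) (Fin N) ℝ) (hU : Uᵀ * U = 1)
    (V : Matrix (Fin K) (Fin K) ℝ) (hV : Vᵀ * V = 1)
    (C : Matrix (Fin N) (Fin K) ℝ)
    (hCoff : ∀ (i : Fin N) (j : Fin K), (i : ℕ) ≠ (j : ℕ) → C i j = 0)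
    (hCb : ∀ i j, |C i j| ≤ lam) (v : Fin K → ℝ) :
    ∑ i, (((U * C * Vᵀ) *ᵥ v) i) ^ 2 ≤ lam ^ 2 * ∑ j, (v j) ^ 2 := by
  have hVt : Vᵀᵀ * Vᵀ = 1 := by
    rw [Matrix.transpose_transpose]
    exact (mul_eq_one_comm).mp hV
  have h1 : (U * C * Vᵀ) *ᵥ v = U *ᵥ (C *ᵥ (Vᵀ *ᵥ v)) := by
    rw [Matrix.mulVec_mulVec, Matrix.mulVec_mulVec]
  rw [h1, mulVec_norm_eq U hU]
  calc ∑ i, ((C *ᵥ (Vᵀ *ᵥ v)) i) ^ 2 ≤ lam ^ 2 * ∑ j, ((Vᵀ *ᵥ v) j) ^ 2 :=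
        mulVec_pseudo_diag_bound lam C hCoff hCb _
    _ = lam ^ 2 * ∑ j, (v j) ^ 2 := by rw [mulVec_norm_eq Vᵀ hVt]

/-- sum of square roots of eigenvalues of `V * diagonal d * Vᵀ`. -/
lemma sum_sqrt_eig_eq {K : ℕ} {M : Matrix (Fin K) (Fin K) ℝ} (hM : M.IsHermitian)
    (V : Matrix (Fin K) (Fin K) ℝ) (hV : Vᵀ * V = 1) (d : Fin K → ℝ)
    (hMeq : M = V * Matrix.diagonal d * Vᵀ) :
    ∑ i, Real.sqrt (hM.eigenvalues i) = ∑ j, Real.sqrt (d j) := by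
  have hcp : M.charpoly = (Matrix.diagonal d).charpoly := by
    rw [hMeq, Matrix.mul_assoc, Matrix.charpoly_mul_comm, Matrix.mul_assoc, hV, Matrix.mul_one]
  have hroots := hM.roots_charpoly_eq_eigenvalues
  rw [hcp, Matrix.charpoly_diagonal, Polynomial.roots_prod _ _ (by
    simp [Finset.prod_ne_zero_iff, Polynomial.X_sub_C_ne_zero])] at hroots
  simp only [Polynomial.roots_X_sub_C, Multiset.bind_singleton] at hroots
  have hm : Multiset.map hM.eigenvalues Finset.univ.val = Multiset.map d Finset.univ.val := by
    simpa using hroots.symm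
  rw [Finset.sum_eq_multiset_sum, Finset.sum_eq_multiset_sum]
  have h2 := congrArg (fun s => (Multiset.map Real.sqrt s).sum) hm
  simpa only [Multiset.map_map, Function.comp_def] using h2

/-- Nuclear norm of `U * E * Vᵀ` for a pseudo-diagonal nonnegative `E`. -/
lemma nuclear_UEV {N K : ℕ}
    (U : Matrix (Fin N) (Fin N) ℝ) (hU : Uᵀ * U = 1)
    (V : Matrix (Fin K) (Fin K) ℝ) (hV : Vᵀ * V = 1)
    (E : Matrix (Fin N) (Fin K) ℝ)
    (hEoff : ∀ (i : Fin N) (j : Fin K), (i : ℕ) ≠ (j : ℕ) → E i j = 0)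
    (hEnn : ∀ (i : Fin N) (j : Fin K), 0 ≤ E i j) :
    nuclearNorm (U * E * Vᵀ) = ∑ j : Fin K, (if h : (j : ℕ) < N then E ⟨j, h⟩ j else 0) := by
  set sval : Fin K → ℝ := fun j => if h : (j : ℕ) < N then E ⟨j, h⟩ j else 0 with hsval
  have hsval_nn : ∀ j, 0 ≤ sval j := by
    intro j; by_cases h : (j : ℕ) < N <;> simp [hsval, h, hEnn]
  set Ah : Matrix (Fin N) (Fin K) ℝ := U * E * Vᵀ with hAh
  have hM : (Ahᴴ * Ah).PosSemidef := Matrix.posSemidef_conjTranspose_mul_self Ah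
  have hEtE : Eᵀ * E = Matrix.diagonal (fun j => sval j ^ 2) := by
    ext j j'
    rw [Matrix.mul_apply]
    by_cases hjj : j = j'
    · subst hjj
      rw [Matrix.diagonal_apply_eq]
      by_cases h : (j : ℕ) < N
      · rw [Finset.sum_eq_single (⟨(j : ℕ), h⟩ : Fin N)]
        · simp [hsval, h, pow_two]
        · intro i _ hi
          rw [Matrix.transpose_apply, hEoff i j (fun hc => hi (by ext; simp [hc])), zero_mul]
        · simp
      · rw [Finset.sum_eq_zero, hsval]
        · simp [h]
        · intro i _
          rw [Matrix.transpose_apply, hEoff i j (by omega), zero_mul]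
    · rw [Matrix.diagonal_apply_ne _ hjj]
      apply Finset.sum_eq_zero
      intro i _
      rw [Matrix.transpose_apply]
      by_cases hij : (i : ℕ) = (j : ℕ)
      · rw [hEoff i j' (by omega), mul_zero]
      · rw [hEoff i j hij, zero_mul]
  have hMeq : Ahᴴ * Ah = V * (Matrix.diagonal (fun j => sval j ^ 2)) * Vᵀ := by
    rw [Matrix.conjTranspose_eq_transpose_of_trivial, hAh]
    have collapse : ∀ (X : Matrix (Fin N) (Fin K) ℝ), Uᵀ * (U * X) = X := by
      intro X; rw [← Matrix.mul_assoc, hU, Matrix.one_mul]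
    simp only [Matrix.transpose_mul, Matrix.transpose_transpose, Matrix.mul_assoc, collapse]
    rw [← hEtE]
    simp only [Matrix.mul_assoc]
  set B : Matrix (Fin K) (Fin K) ℝ := V * Matrix.diagonal sval * Vᵀ with hB
  have hBpsd : B.PosSemidef := by
    have hdg : (Matrix.diagonal sval).PosSemidef := by
      rw [Matrix.posSemidef_diagonal_iff]
      intro i; exact hsval_nn i
    have := hdg.mul_mul_conjTranspose_same V
    rwa [Matrix.conjTranspose_eq_transpose_of_trivial] at this
  have hB2 : B ^ 2 = Ahᴴ * Ah := by
    rw [pow_two, hB, hMeq]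
    have collapseV : ∀ (X : Matrix (Fin K) (Fin K) ℝ), Vᵀ * (V * X) = X := by
      intro X; rw [← Matrix.mul_assoc, hV, Matrix.one_mul]
    calc V * Matrix.diagonal sval * Vᵀ * (V * Matrix.diagonal sval * Vᵀ)
        = V * (Matrix.diagonal sval * (Vᵀ * (V * (Matrix.diagonal sval * Vᵀ)))) := by
          simp only [Matrix.mul_assoc]
      _ = V * (Matrix.diagonal sval * (Matrix.diagonal sval * Vᵀ)) := by rw [collapseV]
      _ = V * Matrix.diagonal (fun j => sval j ^ 2) * Vᵀ := by
          rw [← Matrix.mul_assoc, ← Matrix.mul_assoc,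
            Matrix.mul_assoc V (Matrix.diagonal sval) (Matrix.diagonal sval),
            Matrix.diagonal_mul_diagonal]
          have hfun : (fun j => sval j * sval j) = fun j => sval j ^ 2 := by
            funext j; rw [pow_two]
          rw [hfun]
  rw [nuclearNorm, sum_sqrt_eig_eq (Matrix.isHermitian_conjTranspose_mul_self Ah) V hV _ hMeq]
  apply Finset.sum_congr rfl
  intro j _
  exact Real.sqrt_sq (hsval_nn j)

/-- Cai–Candès–Shen: for any matrix `Z` and `λ ≥ 0`, the unique minimizer of
`A ↦ (1/2)‖Z − A‖_F² + λ‖A‖_*` is the singular value soft-thresholding `S_λ(Z) = U D_λ Vᵀ`. -/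
theorem svt_prox_nuclear_norm {N K : ℕ} (lam : ℝ) (hlam : 0 ≤ lam)
    (Z : Matrix (Fin N) (Fin K) ℝ)
    (U : Matrix (Fin N) (Fin N) ℝ) (D : Matrix (Fin N) (Fin K) ℝ)
    (V : Matrix (Fin K) (Fin K) ℝ) (hSVD : IsSVD Z U D V) :
    ∀ A : Matrix (Fin N) (Fin K) ℝ,
      (1 / 2) * frobSq (Z - U * softDiag lam D * Vᵀ) + lam * nuclearNorm (U * softDiag lam D * Vᵀ)
        ≤ (1 / 2) * frobSq (Z - A) + lam * nuclearNorm A ∧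
      ((1 / 2) * frobSq (Z - A) + lam * nuclearNorm A
          = (1 / 2) * frobSq (Z - U * softDiag lam D * Vᵀ)
            + lam * nuclearNorm (U * softDiag lam D * Vᵀ)
        → A = U * softDiag lam D * Vᵀ) := by
  obtain ⟨hU, hV, hDoff, hDnn, hZ⟩ := hSVD
  set E : Matrix (Fin N) (Fin K) ℝ := softDiag lam D with hE
  set Ah : Matrix (Fin N) (Fin K) ℝ := U * E * Vᵀ with hAh
  set C : Matrix (Fin N) (Fin K) ℝ := D - E with hC
  -- facts about E
  have hEoff : ∀ (i : Fin N) (j : Fin K), (i : ℕ) ≠ (j : ℕ) → E i j = 0 := by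
    intro i j hij; simp [hE, softDiag, hij]
  have hEnn : ∀ (i : Fin N) (j : Fin K), 0 ≤ E i j := by
    intro i j; by_cases h : (i : ℕ) = (j : ℕ) <;> simp [hE, softDiag, h, le_max_right]
  -- facts about C
  have hCoff : ∀ (i : Fin N) (j : Fin K), (i : ℕ) ≠ (j : ℕ) → C i j = 0 := by
    intro i j hij
    simp [hC, Matrix.sub_apply, hEoff i j hij, hDoff i j hij]
  have hCb : ∀ (i : Fin N) (j : Fin K), |C i j| ≤ lam := by
    intro i j
    by_cases h : (i : ℕ) = (j : ℕ)
    · have hD := hDnn i j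
      have hEv : E i j = max (D i j - lam) 0 := by simp [hE, softDiag, h]
      have hCv : C i j = D i j - max (D i j - lam) 0 := by
        simp [hC, Matrix.sub_apply, hEv]
      rcases le_total (D i j) lam with h2 | h2
      · rw [hCv, max_eq_right (by linarith), sub_zero, abs_le]
        exact ⟨by linarith, h2⟩
      · rw [hCv, max_eq_left (by linarith), abs_le]
        constructor <;> [linarith; linarith]
    · rw [hCoff i j h]; simpa using hlam
  -- Z − Ah = U C Vᵀ
  have hG : Z - Ah = U * C * Vᵀ := by
    rw [hZ, hAh, hC, Matrix.mul_sub, Matrix.sub_mul]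
  -- subgradient inequality for arbitrary A'
  have hsub : ∀ A' : Matrix (Fin N) (Fin K) ℝ, ipF (Z - Ah) A' ≤ lam * nuclearNorm A' := by
    intro A'
    rw [hG]
    exact ip_le_nuclear lam hlam _ A'
      (fun v => UCV_mulVec_bound lam U hU V hV C hCoff hCb v)
  -- nuclear norm of Ah and the equality case of the subgradient inequality
  have hnuc : nuclearNorm Ah = ∑ j : Fin K, (if h : (j : ℕ) < N then E ⟨j, h⟩ j else 0) :=
    nuclear_UEV U hU V hV E hEoff hEnn
  have hipAh : ipF (Z - Ah) Ah = lam * nuclearNorm Ah := by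
    rw [hG, hAh, ipF_conj U V hU hV C E, ipF_pseudo_diag C E hEoff, hnuc, Finset.mul_sum]
    apply Finset.sum_congr rfl
    intro j _
    by_cases h : (j : ℕ) < N
    · rw [dif_pos h, dif_pos h]
      have hd := hDnn ⟨(j : ℕ), h⟩ j
      have hEv : E ⟨(j : ℕ), h⟩ j = max (D ⟨(j : ℕ), h⟩ j - lam) 0 := by
        simp [hE, softDiag]
      have hCv : C ⟨(j : ℕ), h⟩ j = D ⟨(j : ℕ), h⟩ j - max (D ⟨(j : ℕ), h⟩ j - lam) 0 := by
        simp [hC, Matrix.sub_apply, hEv]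
      rw [hEv, hCv]
      rcases le_total (D ⟨(j : ℕ), h⟩ j) lam with h2 | h2
      · rw [max_eq_right (by linarith)]; ring
      · rw [max_eq_left (by linarith)]; ring
    · rw [dif_neg h, dif_neg h, mul_zero]
  intro A
  -- main decomposition
  have hdecomp : (1 / 2) * frobSq (Z - A) + lam * nuclearNorm A
      = ((1 / 2) * frobSq (Z - Ah) + lam * nuclearNorm Ah)
        + (1 / 2) * frobSq (Ah - A) + (lam * nuclearNorm A - ipF (Z - Ah) A) := by
    have hsplit : Z - A = (Z - Ah) + (Ah - A) := by abel
    rw [hsplit, frobSq_add, ipF_sub_right, hipAh]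
    ring
  have hfrob_nn := frobSq_nonneg (Ah - A)
  have hslack := hsub A
  constructor
  · rw [hdecomp]; linarith
  · intro heq
    rw [hdecomp] at heq
    have hz : frobSq (Ah - A) = 0 := by linarith
    exact (eq_of_frobSq_eq_zero hz).symm
end
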